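/- Let J_i ⊆ K[[x_i,...,x_n]] be ideals for i = 1,...,n, and let J ⊆ K[[x_1,...,x_n]] be the ideal generated by Σ_{i=1}^n x_i J_i. Then for every k ≥ 2, the power J^k is d-Golod, i.e., d(J^k)² ⊆ J^k. -/

import Mathlib

open Classical in
/-- The operator `d^r` on `K[[x_1,…,x_n]]`. -/
noncomputable def dOp {K : Type*} [Field K] {n : ℕ} (r : Fin n)
    (f : MvPowerSeries (Fin n) K) : MvPowerSeries (Fin n) K :=
  fun m => if (∀ i : Fin n, i < r → m i = 0)
    then MvPowerSeries.coeff (m + Finsupp.single r 1) f else 0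

/-- For an ideal `L` of `K[[x_1,…,x_n]]`, `d(L)` is the ideal generated by all the
elements `d^r(f)` with `f ∈ L` and `1 ≤ r ≤ n`. -/
noncomputable def dIdeal {K : Type*} [Field K] {n : ℕ}
    (L : Ideal (MvPowerSeries (Fin n) K)) : Ideal (MvPowerSeries (Fin n) K) :=
  Ideal.span {g | ∃ f ∈ L, ∃ r : Fin n, g = dOp r f}

open MvPowerSeries Finsupp

namespace DGolodAux

variable {K : Type*} [Field K] {n : ℕ}

def Asup (i : Fin n) : Set (MvPowerSeries (Fin n) K) :=
  {f | ∀ m : Fin n →₀ ℕ, (∃ l : Fin n, l < i ∧ m l ≠ 0) → MvPowerSeries.coeff m f = 0}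

theorem zero_mem_Asup (i : Fin n) : (0 : MvPowerSeries (Fin n) K) ∈ Asup i :=
  fun _ _ => map_zero _

theorem add_mem_Asup {i : Fin n} {f g : MvPowerSeries (Fin n) K}
    (hf : f ∈ Asup i) (hg : g ∈ Asup i) : f + g ∈ Asup i := fun m hm => by
  rw [map_add, hf m hm, hg m hm, add_zero]

theorem mul_mem_Asup {i : Fin n} {f g : MvPowerSeries (Fin n) K}
    (hf : f ∈ Asup i) (hg : g ∈ Asup i) : f * g ∈ Asup i := by
  classical
  rintro m ⟨l, hl, hml⟩
  rw [MvPowerSeries.coeff_mul]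
  apply Finset.sum_eq_zero
  rintro ⟨p, q⟩ hpq
  rw [Finset.HasAntidiagonal.mem_antidiagonal] at hpq
  have h : p l ≠ 0 ∨ q l ≠ 0 := by
    by_contra h
    push_neg at h
    apply hml
    rw [← hpq]
    simp [Finsupp.add_apply, h.1, h.2]
  rcases h with h | h
  · rw [hf p ⟨l, hl, h⟩, zero_mul]
  · rw [hg q ⟨l, hl, h⟩, mul_zero]

theorem Asup_mono {i j : Fin n} (hij : i ≤ j) : (Asup j : Set (MvPowerSeries (Fin n) K)) ⊆ Asup i :=
  fun f hf m ⟨l, hl, hml⟩ => hf m ⟨l, lt_of_lt_of_le hl hij, hml⟩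

theorem X_mem_Asup {i j : Fin n} (hij : i ≤ j) : (X j : MvPowerSeries (Fin n) K) ∈ Asup i := by
  classical
  rintro m ⟨l, hl, hml⟩
  rw [MvPowerSeries.coeff_X]
  split
  · next h =>
    exfalso
    subst h
    rw [Finsupp.single_apply] at hml
    split at hml
    · next hjl => subst hjl; exact absurd (lt_of_lt_of_le hl hij) (lt_irrefl _)
    · exact hml rfl
  · rfl

theorem coeff_dOp_of {r : Fin n} {m : Fin n →₀ ℕ} (f : MvPowerSeries (Fin n) K)
    (h : ∀ i : Fin n, i < r → m i = 0) :
    MvPowerSeries.coeff m (dOp r f) = MvPowerSeries.coeff (m + Finsupp.single r 1) f := by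
  rw [MvPowerSeries.coeff_apply, dOp, if_pos h]

theorem coeff_dOp_of_not {r : Fin n} {m : Fin n →₀ ℕ} (f : MvPowerSeries (Fin n) K)
    (h : ¬ ∀ i : Fin n, i < r → m i = 0) :
    MvPowerSeries.coeff m (dOp r f) = 0 := by
  rw [MvPowerSeries.coeff_apply, dOp, if_neg h]

theorem dOp_mem_Asup (r : Fin n) (f : MvPowerSeries (Fin n) K) : dOp r f ∈ Asup r := by
  rintro m ⟨l, hl, hml⟩
  exact coeff_dOp_of_not f (fun h => hml (h l hl))

theorem coeff_X_mul' (s : Fin n) (m : Fin n →₀ ℕ) (φ : MvPowerSeries (Fin n) K) :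
    MvPowerSeries.coeff m (X s * φ) =
      if m s ≠ 0 then MvPowerSeries.coeff (m - Finsupp.single s 1) φ else 0 := by
  classical
  rw [X_def, coeff_monomial_mul]
  congr 1
  · simp [Finsupp.single_le_iff, Nat.one_le_iff_ne_zero]
  · rw [one_mul]

/-- Uniqueness of the decomposition `f = ∑ x_r c_r` with `c_r ∈ K[[x_r,…,x_n]]`. -/
theorem dOp_eq_of_rep {c : Fin n → MvPowerSeries (Fin n) K}
    (hc : ∀ i, c i ∈ Asup i) {f : MvPowerSeries (Fin n) K}
    (hf : f = ∑ i, X i * c i) (r : Fin n) : dOp r f = c r := by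
  classical
  apply MvPowerSeries.ext
  intro m
  by_cases h : ∀ i : Fin n, i < r → m i = 0
  · rw [coeff_dOp_of f h, hf, map_sum]
    rw [Finset.sum_eq_single r]
    · rw [coeff_X_mul']
      have hr : ((m + Finsupp.single r 1) : Fin n →₀ ℕ) r ≠ 0 := by
        rw [Finsupp.add_apply, Finsupp.single_apply, if_pos rfl]
        omega
      rw [if_pos hr, add_tsub_cancel_right]
    · intro i _ hir
      rw [coeff_X_mul']
      rcases lt_or_gt_of_ne hir with hlt | hgt
      · rw [if_neg]
        simp only [Finsupp.add_apply, Finsupp.single_apply, if_neg (Ne.symm hir), add_zero,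
          ne_eq, not_not]
        exact h i hlt
      · split
        · apply hc i
          refine ⟨r, hgt, ?_⟩
          rw [Finsupp.tsub_apply, Finsupp.add_apply, Finsupp.single_apply, if_pos rfl,
            Finsupp.single_apply, if_neg hir]
          omega
        · rfl
    · intro hr
      exact absurd (Finset.mem_univ r) hr
  · rw [coeff_dOp_of_not f h]
    push_neg at h
    obtain ⟨i, hir, hmi⟩ := h
    exact (hc r m ⟨i, hir, hmi⟩).symm

noncomputable def pPart (h : MvPowerSeries (Fin n) K) (i : Fin n) :
    MvPowerSeries (Fin n) K :=
  h - ∑ r ∈ Finset.univ.filter (· < i), X r * dOp r h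

theorem pPart_add_sum (h : MvPowerSeries (Fin n) K) (i : Fin n) :
    pPart h i + ∑ r ∈ Finset.univ.filter (· < i), X r * dOp r h = h := by
  rw [pPart, sub_add_cancel]

theorem pPart_mem_Asup (h : MvPowerSeries (Fin n) K) (i : Fin n) : pPart h i ∈ Asup i := by
  classical
  rintro m ⟨l, hl, hml⟩
  rw [pPart, map_sub, map_sum]
  have hls : l ∈ m.support := Finsupp.mem_support_iff.2 hml
  set l0 := m.support.min' ⟨l, hls⟩ with hl0def
  have hl0mem : l0 ∈ m.support := Finset.min'_mem _ _
  have hml0 : m l0 ≠ 0 := Finsupp.mem_support_iff.1 hl0mem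
  have hl0le : l0 ≤ l := Finset.min'_le _ _ hls
  have hl0i : l0 < i := lt_of_le_of_lt hl0le hl
  have hmin : ∀ j, j < l0 → m j = 0 := by
    intro j hj
    by_contra hmj
    exact absurd (Finset.min'_le _ _ (Finsupp.mem_support_iff.2 hmj)) (not_le.2 hj)
  have hsum : (∑ r ∈ Finset.univ.filter (· < i),
      MvPowerSeries.coeff m (X r * dOp r h)) = MvPowerSeries.coeff m h := by
    rw [Finset.sum_eq_single l0]
    · rw [coeff_X_mul', if_pos hml0, coeff_dOp_of]
      · rw [tsub_add_cancel_of_le]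
        exact Finsupp.single_le_iff.2 (Nat.one_le_iff_ne_zero.2 hml0)
      · intro j hj
        rw [Finsupp.tsub_apply, Finsupp.single_apply, if_neg (ne_of_gt hj), hmin j hj]
        rfl
    · intro r hr hrne
      rw [coeff_X_mul']
      split
      · next hmr =>
        have hl0r : l0 < r := lt_of_le_of_ne
          (Finset.min'_le _ _ (Finsupp.mem_support_iff.2 hmr)) (Ne.symm hrne)
        apply coeff_dOp_of_not
        intro hcon
        apply hml0
        have := hcon l0 hl0r
        rwa [Finsupp.tsub_apply, Finsupp.single_apply, if_neg (ne_of_gt hl0r),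
          Nat.sub_zero] at this
      · rfl
    · intro hcon
      exfalso
      apply hcon
      rw [Finset.mem_filter]
      exact ⟨Finset.mem_univ l0, hl0i⟩
  rw [hsum, sub_self]

theorem sum_mem_Asup {i : Fin n} {α : Type*} {s : Finset α}
    {g : α → MvPowerSeries (Fin n) K} (h : ∀ x ∈ s, g x ∈ Asup i) :
    (∑ x ∈ s, g x) ∈ Asup i := by
  rintro m hm
  rw [map_sum]
  exact Finset.sum_eq_zero fun x hx => h x hx m hm

theorem sum_triangle_swap {M : Type*} [AddCommMonoid M] (g : Fin n → Fin n → M) :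
    (∑ i, ∑ r ∈ Finset.univ.filter (· < i), g r i)
      = ∑ r, ∑ i ∈ Finset.univ.filter (r < ·), g r i := by
  classical
  simp only [Finset.sum_filter]
  exact Finset.sum_comm

variable (J : Ideal (MvPowerSeries (Fin n) K))

/-- Elements decomposable as `∑ x_i c_i` with `c_i ∈ A_i ∩ J^k` and `x_i c_i ∈ J^(k+1)`. -/
def Mset (k : ℕ) : Set (MvPowerSeries (Fin n) K) :=
  {f | ∃ c : Fin n → MvPowerSeries (Fin n) K,
    (∀ i, c i ∈ Asup i ∧ c i ∈ J ^ k ∧ X i * c i ∈ J ^ (k + 1)) ∧ f = ∑ i, X i * c i}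

theorem pow_succ_le (k : ℕ) : J ^ (k + 1) ≤ J ^ k := by
  rw [pow_succ]
  exact Ideal.mul_le_left

/-- `Mset` is an ideal. -/
noncomputable def MIdeal (k : ℕ) : Ideal (MvPowerSeries (Fin n) K) where
  carrier := Mset J k
  zero_mem' := by
    refine ⟨0, fun i => ⟨zero_mem_Asup i, Submodule.zero_mem _, ?_⟩, by simp⟩
    rw [Pi.zero_apply, mul_zero]
    exact Submodule.zero_mem _
  add_mem' := by
    rintro a b ⟨c, hc, rfl⟩ ⟨c', hc', rfl⟩
    refine ⟨c + c', fun i => ⟨add_mem_Asup (hc i).1 (hc' i).1,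
      Submodule.add_mem _ (hc i).2.1 (hc' i).2.1, ?_⟩, ?_⟩
    · rw [Pi.add_apply, mul_add]
      exact Submodule.add_mem _ (hc i).2.2 (hc' i).2.2
    · rw [← Finset.sum_add_distrib]
      exact Finset.sum_congr rfl fun i _ => by rw [Pi.add_apply, mul_add]
  smul_mem' := by
    classical
    rintro h f ⟨c, hc, rfl⟩
    rw [smul_eq_mul]
    refine ⟨fun t => pPart h t * c t
      + ∑ i ∈ Finset.univ.filter (t < ·), dOp t h * (X i * c i), fun t => ⟨?_, ?_, ?_⟩, ?_⟩
    · apply add_mem_Asup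
      · exact mul_mem_Asup (pPart_mem_Asup h t) (hc t).1
      · apply sum_mem_Asup
        intro i hi
        have hti : t < i := (Finset.mem_filter.1 hi).2
        exact mul_mem_Asup (dOp_mem_Asup t h)
          (Asup_mono hti.le (mul_mem_Asup (X_mem_Asup le_rfl) (hc i).1))
    · apply Submodule.add_mem
      · exact Ideal.mul_mem_left _ _ (hc t).2.1
      · exact Submodule.sum_mem _ fun i _ =>
          Ideal.mul_mem_left _ _ (pow_succ_le J k (hc i).2.2)
    · rw [mul_add]
      apply Submodule.add_mem
      · rw [mul_left_comm]
        exact Ideal.mul_mem_left _ _ (hc t).2.2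
      · rw [Finset.mul_sum]
        refine Submodule.sum_mem _ fun i _ => ?_
        rw [← mul_assoc]
        exact Ideal.mul_mem_left _ _ (hc i).2.2
    · calc h * ∑ i, X i * c i = ∑ i, h * (X i * c i) := by rw [Finset.mul_sum]
        _ = ∑ i, (X i * (pPart h i * c i)
            + ∑ r ∈ Finset.univ.filter (· < i), X r * (dOp r h * (X i * c i))) := by
          refine Finset.sum_congr rfl fun i _ => ?_
          conv_lhs => rw [← pPart_add_sum h i]
          rw [add_mul, Finset.sum_mul]
          congr 1
          · ring
          · exact Finset.sum_congr rfl fun r _ => by ring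
        _ = (∑ i, X i * (pPart h i * c i))
            + ∑ i, ∑ r ∈ Finset.univ.filter (· < i), X r * (dOp r h * (X i * c i)) :=
          Finset.sum_add_distrib
        _ = (∑ t, X t * (pPart h t * c t))
            + ∑ t, ∑ i ∈ Finset.univ.filter (t < ·), X t * (dOp t h * (X i * c i)) := by
          rw [sum_triangle_swap (fun r i => X r * (dOp r h * (X i * c i)))]
        _ = ∑ t, (X t * (pPart h t * c t)
            + ∑ i ∈ Finset.univ.filter (t < ·), X t * (dOp t h * (X i * c i))) :=
          Finset.sum_add_distrib.symm
        _ = ∑ t, X t * (pPart h t * c t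
            + ∑ i ∈ Finset.univ.filter (t < ·), dOp t h * (X i * c i)) := by
          refine Finset.sum_congr rfl fun t _ => ?_
          rw [mul_add, Finset.mul_sum]

theorem single_mem_MIdeal {k : ℕ} {i : Fin n} {c : MvPowerSeries (Fin n) K}
    (h1 : c ∈ Asup i) (h2 : c ∈ J ^ k) (h3 : X i * c ∈ J ^ (k + 1)) :
    X i * c ∈ MIdeal J k := by
  classical
  refine ⟨fun j => if j = i then c else 0, fun j => ?_, ?_⟩
  · dsimp only
    by_cases hj : j = i
    · subst hj
      simpa using ⟨h1, h2, h3⟩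
    · rw [if_neg hj]
      exact ⟨zero_mem_Asup j, Submodule.zero_mem _, by rw [mul_zero]; exact Submodule.zero_mem _⟩
  · rw [Finset.sum_eq_single i]
    · dsimp only
      rw [if_pos rfl]
    · intro j _ hj
      dsimp only
      rw [if_neg hj, mul_zero]
    · intro hcon
      exact absurd (Finset.mem_univ i) hcon

theorem pow_le_MIdeal (Js : Fin n → Set (MvPowerSeries (Fin n) K))
    (hsupp : ∀ i : Fin n, ∀ f ∈ Js i, f ∈ Asup i)
    (hJ : J = Ideal.span (⋃ i : Fin n, (fun f => X i * f) '' Js i)) :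
    ∀ k : ℕ, J ^ (k + 1) ≤ MIdeal J k := by
  intro k
  induction k with
  | zero =>
    rw [pow_one]
    conv_lhs => rw [hJ]
    rw [Ideal.span_le]
    rintro x hx
    simp only [Set.mem_iUnion, Set.mem_image] at hx
    obtain ⟨i, g, hg, rfl⟩ := hx
    refine single_mem_MIdeal J (hsupp i g hg) ?_ ?_
    · rw [pow_zero, Ideal.one_eq_top]
      exact Submodule.mem_top
    · rw [zero_add, pow_one, hJ]
      exact Ideal.subset_span
        (Set.mem_iUnion.2 ⟨i, Set.mem_image_of_mem _ hg⟩)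
  | succ k ih =>
    rw [pow_succ, Ideal.mul_le]
    intro b hb a ha
    obtain ⟨c, hc, rfl⟩ := ih hb
    rw [hJ] at ha
    induction ha using Submodule.span_induction with
    | mem x hx =>
      simp only [Set.mem_iUnion, Set.mem_image] at hx
      obtain ⟨i, g, hg, rfl⟩ := hx
      have hXg : X i * g ∈ J := by
        rw [hJ]
        exact Ideal.subset_span (Set.mem_iUnion.2 ⟨i, Set.mem_image_of_mem _ hg⟩)
      rw [Finset.sum_mul]
      refine Submodule.sum_mem (MIdeal J (k + 1)) fun j _ => ?_
      rcases le_or_gt i j with hij | hij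
      · have heq : X j * c j * (X i * g) = X i * (g * (X j * c j)) := by ring
        rw [heq]
        refine single_mem_MIdeal J ?_ ?_ ?_
        · exact mul_mem_Asup (hsupp i g hg)
            (Asup_mono hij (mul_mem_Asup (X_mem_Asup le_rfl) (hc j).1))
        · exact Ideal.mul_mem_left _ _ (hc j).2.2
        · have h2 : X i * (g * (X j * c j)) = (X i * g) * (X j * c j) := by ring
          rw [h2, show J ^ (k + 1 + 1) = J * J ^ (k + 1) from pow_succ' J (k + 1)]
          exact Ideal.mul_mem_mul hXg (hc j).2.2
      · have heq : X j * c j * (X i * g) = X j * ((X i * g) * c j) := by ring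
        rw [heq]
        refine single_mem_MIdeal J ?_ ?_ ?_
        · exact mul_mem_Asup (mul_mem_Asup (X_mem_Asup hij.le)
            (Asup_mono hij.le (hsupp i g hg))) (hc j).1
        · rw [show J ^ (k + 1) = J * J ^ k from pow_succ' J k]
          exact Ideal.mul_mem_mul hXg (hc j).2.1
        · have h2 : X j * ((X i * g) * c j) = (X i * g) * (X j * c j) := by ring
          rw [h2, show J ^ (k + 1 + 1) = J * J ^ (k + 1) from pow_succ' J (k + 1)]
          exact Ideal.mul_mem_mul hXg (hc j).2.2
    | zero =>
      rw [mul_zero]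
      exact Submodule.zero_mem _
    | add x y hx hy hx' hy' =>
      rw [mul_add]
      exact Submodule.add_mem _ hx' hy'
    | smul a x hx hx' =>
      rw [smul_eq_mul, mul_left_comm]
      exact Ideal.mul_mem_left _ _ hx'

end DGolodAux

/-- Let `J_i ⊆ K[[x_i,…,x_n]]` be an ideal of the subring `K[[x_i,…,x_n]]` for each
`i = 1,…,n` (encoded as a subset of `K[[x_1,…,x_n]]` whose elements only involve the
variables `x_i,…,x_n`, containing `0`, closed under addition and under multiplication
by elements of `K[[x_i,…,x_n]]`), and let `J` be the ideal of `K[[x_1,…,x_n]]`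
generated by `Σ_i x_i·J_i`. Then `J^k` is d-Golod for all `k ≥ 2`: `d(J^k)² ⊆ J^k`. -/
theorem dGolod_pow_of_shifted {K : Type*} [Field K] {n : ℕ}
    (Js : Fin n → Set (MvPowerSeries (Fin n) K))
    (hsupp : ∀ i : Fin n, ∀ f ∈ Js i, ∀ m : Fin n →₀ ℕ,
      (∃ l : Fin n, l < i ∧ m l ≠ 0) → MvPowerSeries.coeff m f = 0)
    (hzero : ∀ i : Fin n, (0 : MvPowerSeries (Fin n) K) ∈ Js i)
    (hadd : ∀ i : Fin n, ∀ f ∈ Js i, ∀ g ∈ Js i, f + g ∈ Js i)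
    (hmul : ∀ i : Fin n, ∀ f ∈ Js i, ∀ g : MvPowerSeries (Fin n) K,
      (∀ m : Fin n →₀ ℕ, (∃ l : Fin n, l < i ∧ m l ≠ 0) → MvPowerSeries.coeff m g = 0) →
      g * f ∈ Js i)
    (J : Ideal (MvPowerSeries (Fin n) K))
    (hJ : J = Ideal.span (⋃ i : Fin n, (fun f => MvPowerSeries.X i * f) '' Js i)) :
    ∀ k : ℕ, 2 ≤ k → (dIdeal (J ^ k)) ^ 2 ≤ J ^ k := by
  intro k hk
  obtain ⟨k', rfl⟩ : ∃ k', k = k' + 2 := ⟨k - 2, by omega⟩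
  have hM := DGolodAux.pow_le_MIdeal J Js hsupp hJ (k' + 1)
  have hd : dIdeal (J ^ (k' + 2)) ≤ J ^ (k' + 1) := by
    rw [dIdeal, Ideal.span_le]
    rintro g ⟨f, hf, r, rfl⟩
    have hf' : f ∈ J ^ (k' + 1 + 1) := hf
    obtain ⟨c, hc, rfl⟩ := hM hf'
    rw [DGolodAux.dOp_eq_of_rep (fun i => (hc i).1) rfl r]
    exact (hc r).2.1
  calc dIdeal (J ^ (k' + 2)) ^ 2 ≤ (J ^ (k' + 1)) ^ 2 := by
        rw [sq, sq]
        exact Ideal.mul_mono hd hd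
    _ ≤ J ^ (k' + 2) := by
        rw [← pow_mul, show (k' + 1) * 2 = k' + (k' + 2) by ring, pow_add]
        exact Ideal.mul_le_right
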